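/- (Full activation, k = E) For every u ∈ ℝ^E and every real λ < 1, the Sparsegen routing output p* = sparsegen(u, λ) satisfies p*_i > 0 for all i ∈ {1,…,E} if and only if λ < 1 − (U_E − E·u_(E)). -/

import Mathlib

noncomputable section

/-- The probability simplex in `ℝ^E`. -/
def simplex (E : ℕ) : Set (EuclideanSpace ℝ (Fin E)) :=
  {p | (∀ i, 0 ≤ p i) ∧ ∑ i, p i = 1}

/-- The Sparsegen objective `g_{u,λ}(p) = ‖p − u‖₂² − λ‖p‖₂²`. -/
def sparsegenObj {E : ℕ} (u : EuclideanSpace ℝ (Fin E)) (lam : ℝ)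
    (p : EuclideanSpace ℝ (Fin E)) : ℝ :=
  ‖p - u‖ ^ 2 - lam * ‖p‖ ^ 2

lemma sparsegenObj_eq {E : ℕ} (u : EuclideanSpace ℝ (Fin E)) (lam : ℝ)
    (p : EuclideanSpace ℝ (Fin E)) :
    sparsegenObj u lam p = (∑ i, (p i - u i)^2) - lam * ∑ i, (p i)^2 := by
  unfold sparsegenObj
  rw [EuclideanSpace.norm_eq, Real.sq_sqrt (by positivity),
    EuclideanSpace.norm_eq, Real.sq_sqrt (by positivity)]
  simp [sq_abs]

lemma quad_identity {E : ℕ} (u q p : Fin E → ℝ) (lam c : ℝ)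
    (hq : ∀ k, (1 - lam) * q k - u k = c) (hp1 : ∑ k, p k = 1) (hq1 : ∑ k, q k = 1) :
    (∑ k, (p k - u k)^2) - lam * ∑ k, (p k)^2 =
      ((∑ k, (q k - u k)^2) - lam * ∑ k, (q k)^2) + (1 - lam) * ∑ k, (p k - q k)^2 := by
  have h : ∀ k ∈ Finset.univ, (p k - u k)^2 - lam * (p k)^2 =
      ((q k - u k)^2 - lam * (q k)^2) + ((1 - lam) * (p k - q k)^2 + 2 * c * (p k - q k)) := by
    intro k _
    have h := hq k
    have hu : u k = (1 - lam) * q k - c := by linarith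
    rw [hu]; ring
  have hsum := Finset.sum_congr rfl h
  simp only [Finset.sum_add_distrib, Finset.sum_sub_distrib, ← Finset.mul_sum] at hsum
  rw [hp1, hq1] at hsum
  simp only [sub_self, mul_zero, add_zero] at hsum
  linarith

set_option maxHeartbeats 1000000 in
theorem full_activation_iff (E : ℕ) (hE : 1 ≤ E)
    (u : EuclideanSpace ℝ (Fin E)) (σ : Equiv.Perm (Fin E))
    (hσ : Antitone fun i => u (σ i)) (lam : ℝ) (hlam : lam < 1)
    (p : EuclideanSpace ℝ (Fin E)) (hp : p ∈ simplex E)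
    (hmin : IsMinOn (sparsegenObj u lam) (simplex E) p) :
    (∀ i : Fin E, 0 < p i) ↔
      lam < 1 - ((∑ i : Fin E, u (σ i)) - E * u (σ ⟨E - 1, by omega⟩)) := by
  have h1 : (0:ℝ) < 1 - lam := by linarith
  have hEpos : (0:ℝ) < (E:ℝ) := by exact_mod_cast hE
  set m : Fin E := ⟨E - 1, by omega⟩ with hm
  set U : ℝ := ∑ i : Fin E, u (σ i) with hU
  have hUu : ∑ k, u k = U := by
    rw [hU]; exact (Equiv.sum_comp σ u).symm
  set c : ℝ := ((1 - lam) - U) / E with hc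
  set q : EuclideanSpace ℝ (Fin E) := WithLp.toLp 2 (fun k => (u k + c) / (1 - lam)) with hqdef
  have hqkv : ∀ k, q k = (u k + c) / (1 - lam) := fun k => rfl
  have hqk : ∀ k, (1 - lam) * q k - u k = c := by
    intro k; rw [hqkv]; field_simp; ring
  have hq1 : ∑ k, q k = 1 := by
    calc ∑ k, q k = ∑ k, (u k + c) / (1 - lam) := Finset.sum_congr rfl fun k _ => hqkv k
      _ = ((∑ k, u k) + E * c) / (1 - lam) := by
          rw [← Finset.sum_div, Finset.sum_add_distrib, Finset.sum_const,
            Finset.card_univ, Fintype.card_fin, nsmul_eq_mul]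
      _ = 1 := by rw [hUu, hc]; field_simp; ring
  have humin : ∀ k : Fin E, u (σ m) ≤ u k := by
    intro k
    conv_rhs => rw [← σ.apply_symm_apply k]
    exact hσ (by simpa [hm, Fin.le_def] using Nat.le_sub_one_of_lt (σ.symm k).isLt)
  have hps : ∑ k, p k = 1 := hp.2
  constructor
  · -- forward direction
    intro hpos
    have hconst : ∀ i j : Fin E, (1 - lam) * p i - u i = (1 - lam) * p j - u j := by
      intro i j
      by_cases hij : i = j
      · rw [hij]
      by_contra hne
      set a : ℝ := ((1 - lam) * p i - u i) - ((1 - lam) * p j - u j) with ha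
      have ha0 : a ≠ 0 := fun h => hne (by rw [ha] at h; linarith)
      have haabs : 0 < |a| := abs_pos.mpr ha0
      set s : ℝ := min (min (p i) (p j) / |a|) (1 / (2 * (1 - lam))) with hs
      have hspos : 0 < s := by
        apply lt_min
        · exact div_pos (lt_min (hpos i) (hpos j)) haabs
        · positivity
      have hs2 : s ≤ 1 / (2 * (1 - lam)) := min_le_right _ _
      have hs2' : s * (2 * (1 - lam)) ≤ 1 := (le_div_iff₀ (by positivity)).mp hs2
      set t : ℝ := -s * a with ht
      have htabs : |t| ≤ min (p i) (p j) := by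
        rw [ht, abs_mul, abs_neg, abs_of_pos hspos]
        have h3 : s ≤ min (p i) (p j) / |a| := min_le_left _ _
        calc s * |a| ≤ (min (p i) (p j) / |a|) * |a| := by nlinarith
          _ = min (p i) (p j) := by field_simp
      set p' : EuclideanSpace ℝ (Fin E) :=
        WithLp.toLp 2 (fun k => p k + (if k = i then t else 0) + (if k = j then -t else 0)) with hp'
      have hp'k : ∀ k, p' k = p k + (if k = i then t else 0) + (if k = j then -t else 0) :=
        fun k => rfl
      have habs1 := abs_le.mp (le_trans htabs (min_le_left _ _))
      have habs2 := abs_le.mp (le_trans htabs (min_le_right _ _))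
      have hp'mem : p' ∈ simplex E := by
        constructor
        · intro k
          rw [hp'k]
          by_cases hki : k = i
          · rw [if_pos hki, if_neg (hki ▸ hij), hki]
            linarith [habs1.1]
          by_cases hkj : k = j
          · rw [if_neg hki, if_pos hkj, hkj]
            linarith [habs2.2]
          · rw [if_neg hki, if_neg hkj]
            linarith [hpos k]
        · calc ∑ k, p' k = ∑ k, (p k + (if k = i then t else 0) + (if k = j then -t else 0)) :=
                Finset.sum_congr rfl fun k _ => hp'k k
            _ = 1 := by
                simp only [Finset.sum_add_distrib, hps, Finset.sum_ite_eq',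
                  Finset.mem_univ, if_pos]
                ring
      have hdiff : ∀ k ∈ Finset.univ, (p' k - u k)^2 - lam * (p' k)^2 =
          ((p k - u k)^2 - lam * (p k)^2) +
          ((if k = i then (2 * t * ((1 - lam) * p i - u i) + (1 - lam) * t^2) else 0) +
           (if k = j then (-2 * t * ((1 - lam) * p j - u j) + (1 - lam) * t^2) else 0)) := by
        intro k _
        rw [hp'k]
        by_cases hki : k = i
        · rw [if_pos hki, if_neg (hki ▸ hij), if_pos hki, if_neg (hki ▸ hij), hki]
          ring
        by_cases hkj : k = j
        · rw [if_neg hki, if_pos hkj, if_neg hki, if_pos hkj, hkj]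
          ring
        · rw [if_neg hki, if_neg hkj, if_neg hki, if_neg hkj]
          ring
      have hGdiff : sparsegenObj u lam p'
          = sparsegenObj u lam p + (2 * t * a + 2 * (1 - lam) * t^2) := by
        rw [sparsegenObj_eq, sparsegenObj_eq]
        have hsum := Finset.sum_congr rfl hdiff
        simp only [Finset.sum_add_distrib, Finset.sum_sub_distrib, ← Finset.mul_sum,
          Finset.sum_ite_eq', Finset.mem_univ, if_pos] at hsum
        have he : 2 * t * ((1 - lam) * p i - u i) + (1 - lam) * t^2 +
            (-2 * t * ((1 - lam) * p j - u j) + (1 - lam) * t^2)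
            = 2 * t * a + 2 * (1 - lam) * t^2 := by rw [ha]; ring
        linarith [hsum]
      have hlt : sparsegenObj u lam p' < sparsegenObj u lam p := by
        rw [hGdiff]
        have ha2 : 0 < a^2 := by positivity
        have hsa : 0 < s * a^2 := mul_pos hspos ha2
        have e1 : 2 * t * a + 2 * (1 - lam) * t^2 = s * a^2 * (2 * (1 - lam) * s - 2) := by
          rw [ht]; ring
        have e2 : 2 * (1 - lam) * s - 2 ≤ -1 := by nlinarith
        have e3 : s * a^2 * (2 * (1 - lam) * s - 2) ≤ s * a^2 * (-1) :=
          mul_le_mul_of_nonneg_left e2 hsa.le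
        have e4 : s * a^2 * (-1) < 0 := by linarith
        linarith
      exact absurd (isMinOn_iff.mp hmin p' hp'mem) (not_le.mpr hlt)
    have hsum : (E : ℝ) * ((1 - lam) * p (σ m) - u (σ m)) = (1 - lam) - U := by
      have h4 : ∑ k : Fin E, ((1 - lam) * p k - u k)
          = (E : ℝ) * ((1 - lam) * p (σ m) - u (σ m)) := by
        rw [Finset.sum_congr rfl (fun k _ => hconst k (σ m)), Finset.sum_const,
          Finset.card_univ, Fintype.card_fin, nsmul_eq_mul]
      rw [Finset.sum_sub_distrib, ← Finset.mul_sum, hps, hUu, mul_one] at h4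
      linarith
    have hpm := hpos (σ m)
    have h5 : 0 < (E : ℝ) * ((1 - lam) * p (σ m)) := by positivity
    have h6 : 0 < (E : ℝ) * u (σ m) + ((1 - lam) - U) := by nlinarith
    linarith
  · -- backward direction
    intro hcond
    have hqm : 0 < u (σ m) + c := by
      rw [hc]
      have h2 : 0 < (E : ℝ) * u (σ m) + ((1 - lam) - U) := by linarith
      have h3 := div_pos h2 hEpos
      calc (0:ℝ) < ((E:ℝ) * u (σ m) + ((1 - lam) - U)) / E := h3
        _ = u (σ m) + ((1 - lam) - U) / E := by field_simp
    have hqpos : ∀ k, 0 < q k := by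
      intro k
      rw [hqkv]
      have := humin k
      exact div_pos (by linarith) h1
    have hqmem : q ∈ simplex E := ⟨fun k => (hqpos k).le, hq1⟩
    have hle := isMinOn_iff.mp hmin q hqmem
    rw [sparsegenObj_eq, sparsegenObj_eq] at hle
    have hid := quad_identity u q p lam c hqk hps hq1
    have hnn : ∀ k ∈ Finset.univ, (0:ℝ) ≤ (p k - q k)^2 := fun k _ => sq_nonneg _
    have hsnn : 0 ≤ ∑ k, (p k - q k)^2 := Finset.sum_nonneg hnn
    have hsumle : ∑ k, (p k - q k)^2 ≤ 0 := by nlinarith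
    have hzero := (Finset.sum_eq_zero_iff_of_nonneg hnn).mp (le_antisymm hsumle hsnn)
    intro i
    have hpq : p i = q i := by
      have h7 := sq_eq_zero_iff.mp (hzero i (Finset.mem_univ i))
      linarith
    rw [hpq]
    exact hqpos i
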